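/- Adjoint symmetry of E₃: write E₃(e₁,…,e₆) = a₃∂³+a₂∂²+a₁∂+a₀ with the coefficients aᵢ(x) as in the definition below, and define the adjoint action on a function u by (E₃*u)(x) = (a₃u)'''(x) − (a₂u)''(x) + (a₁u)'(x) − a₀(x)u(x). Then for all e₁,…,e₆ ∈ ℂ, every function u holomorphic on an open set U ⊆ ℂ, and every x ∈ U, (E₃*u)(x) = (E₃(−e₁,−e₂,−e₃,−e₄,2−e₅,2−e₆)u)(x). -/
import Mathlib

noncomputable def Pq (c0 c1 c2 c3 c4 : ℂ) : ℂ → ℂ :=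
  fun y => c0 + c1*y + c2*y^2 + c3*y^3 + c4*y^4

lemma hasDerivAt_Pq (c0 c1 c2 c3 c4 x : ℂ) :
    HasDerivAt (Pq c0 c1 c2 c3 c4) (Pq c1 (2*c2) (3*c3) (4*c4) 0 x) x := by
  have h : HasDerivAt (Pq c0 c1 c2 c3 c4)
      ((((0 + c1*1) + c2*((2:ℕ)*x^(2-1))) + c3*((3:ℕ)*x^(3-1))) + c4*((4:ℕ)*x^(4-1))) x := by
    exact ((((hasDerivAt_const x c0).add ((hasDerivAt_id x).const_mul c1)).add
      ((hasDerivAt_pow 2 x).const_mul c2)).add ((hasDerivAt_pow 3 x).const_mul c3)).add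
      ((hasDerivAt_pow 4 x).const_mul c4)
  convert h using 1
  unfold Pq; push_cast; ring

lemma derivPq_mul (c0 c1 c2 c3 c4 x : ℂ) {u : ℂ → ℂ} (hu : DifferentiableAt ℂ u x) :
    deriv (fun y => Pq c0 c1 c2 c3 c4 y * u y) x
      = Pq c1 (2*c2) (3*c3) (4*c4) 0 x * u x + Pq c0 c1 c2 c3 c4 x * deriv u x :=
  ((hasDerivAt_Pq c0 c1 c2 c3 c4 x).mul hu.hasDerivAt).deriv

lemma key2 (u : ℂ → ℂ) (U : Set ℂ) (hU : IsOpen U) (hu : AnalyticOnNhd ℂ u U)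
    (c0 c1 c2 c3 c4 : ℂ) (x : ℂ) (hx : x ∈ U) :
    deriv (deriv (fun y => Pq c0 c1 c2 c3 c4 y * u y)) x
      = Pq (2*c2) (6*c3) (12*c4) 0 0 x * u x
        + Pq c1 (2*c2) (3*c3) (4*c4) 0 x * deriv u x
        + Pq c1 (2*c2) (3*c3) (4*c4) 0 x * deriv u x
        + Pq c0 c1 c2 c3 c4 x * deriv (deriv u) x := by
  have hEq : Set.EqOn (deriv (fun y => Pq c0 c1 c2 c3 c4 y * u y))
      (fun y => Pq c1 (2*c2) (3*c3) (4*c4) 0 y * u y + Pq c0 c1 c2 c3 c4 y * deriv u y) U :=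
    fun y hy => derivPq_mul c0 c1 c2 c3 c4 y (hu y hy).differentiableAt
  have hEv := Filter.eventuallyEq_of_mem (hU.mem_nhds hx) hEq
  rw [hEv.deriv_eq]
  have h1 : HasDerivAt
      (fun y => Pq c1 (2*c2) (3*c3) (4*c4) 0 y * u y + Pq c0 c1 c2 c3 c4 y * deriv u y)
      ((Pq (2*c2) (2*(3*c3)) (3*(4*c4)) (4*0) 0 x * u x
        + Pq c1 (2*c2) (3*c3) (4*c4) 0 x * deriv u x)
       + (Pq c1 (2*c2) (3*c3) (4*c4) 0 x * deriv u x
        + Pq c0 c1 c2 c3 c4 x * deriv (deriv u) x)) x :=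
    ((hasDerivAt_Pq _ _ _ _ _ x).mul (hu x hx).differentiableAt.hasDerivAt).add
      ((hasDerivAt_Pq _ _ _ _ _ x).mul (hu.deriv x hx).differentiableAt.hasDerivAt)
  rw [h1.deriv]
  unfold Pq; ring

lemma key3 (u : ℂ → ℂ) (U : Set ℂ) (hU : IsOpen U) (hu : AnalyticOnNhd ℂ u U)
    (c0 c1 c2 c3 c4 : ℂ) (x : ℂ) (hx : x ∈ U) :
    deriv (deriv (deriv (fun y => Pq c0 c1 c2 c3 c4 y * u y))) x
      = Pq (6*c3) (24*c4) 0 0 0 x * u x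
        + 3 * (Pq (2*c2) (6*c3) (12*c4) 0 0 x) * deriv u x
        + 3 * (Pq c1 (2*c2) (3*c3) (4*c4) 0 x) * deriv (deriv u) x
        + Pq c0 c1 c2 c3 c4 x * deriv (deriv (deriv u)) x := by
  have hEq : Set.EqOn (deriv (deriv (fun y => Pq c0 c1 c2 c3 c4 y * u y)))
      (fun y => Pq (2*c2) (6*c3) (12*c4) 0 0 y * u y
        + Pq c1 (2*c2) (3*c3) (4*c4) 0 y * deriv u y
        + Pq c1 (2*c2) (3*c3) (4*c4) 0 y * deriv u y
        + Pq c0 c1 c2 c3 c4 y * deriv (deriv u) y) U :=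
    fun y hy => key2 u U hU hu c0 c1 c2 c3 c4 y hy
  have hEv := Filter.eventuallyEq_of_mem (hU.mem_nhds hx) hEq
  rw [hEv.deriv_eq]
  have h1 : HasDerivAt
      (fun y => Pq (2*c2) (6*c3) (12*c4) 0 0 y * u y
        + Pq c1 (2*c2) (3*c3) (4*c4) 0 y * deriv u y
        + Pq c1 (2*c2) (3*c3) (4*c4) 0 y * deriv u y
        + Pq c0 c1 c2 c3 c4 y * deriv (deriv u) y)
      ((((Pq (6*c3) (2*(12*c4)) (3*0) (4*0) 0 x * u x
          + Pq (2*c2) (6*c3) (12*c4) 0 0 x * deriv u x)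
        + (Pq (2*c2) (2*(3*c3)) (3*(4*c4)) (4*0) 0 x * deriv u x
          + Pq c1 (2*c2) (3*c3) (4*c4) 0 x * deriv (deriv u) x))
        + (Pq (2*c2) (2*(3*c3)) (3*(4*c4)) (4*0) 0 x * deriv u x
          + Pq c1 (2*c2) (3*c3) (4*c4) 0 x * deriv (deriv u) x))
        + (Pq c1 (2*c2) (3*c3) (4*c4) 0 x * deriv (deriv u) x
          + Pq c0 c1 c2 c3 c4 x * deriv (deriv (deriv u)) x)) x :=
    ((((hasDerivAt_Pq _ _ _ _ _ x).mul (hu x hx).differentiableAt.hasDerivAt).add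
      ((hasDerivAt_Pq _ _ _ _ _ x).mul (hu.deriv x hx).differentiableAt.hasDerivAt)).add
      ((hasDerivAt_Pq _ _ _ _ _ x).mul (hu.deriv x hx).differentiableAt.hasDerivAt)).add
      ((hasDerivAt_Pq _ _ _ _ _ x).mul (hu.deriv.deriv x hx).differentiableAt.hasDerivAt)
  rw [h1.deriv]
  unfold Pq; ring

lemma itd2 (f : ℂ → ℂ) : iteratedDeriv 2 f = deriv (deriv f) := by
  rw [show (2:ℕ) = 1+1 from rfl, iteratedDeriv_succ, iteratedDeriv_one]

lemma itd3 (f : ℂ → ℂ) : iteratedDeriv 3 f = deriv (deriv (deriv f)) := by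
  rw [show (3:ℕ) = 2+1 from rfl, iteratedDeriv_succ, itd2]
/-!
STATEMENT 14: Adjoint symmetry of E₃:
E₃* u = (a₃u)''' − (a₂u)'' + (a₁u)' − a₀u equals
E₃(−e₁,−e₂,−e₃,−e₄,2−e₅,2−e₆) u.
-/

/-- The accessory parameter A₀₀(e₁,…,e₆) of the equation E₃,
with e₇ := 3 − (e₁+⋯+e₆). -/
noncomputable def A00 (e1 e2 e3 e4 e5 e6 : ℂ) : ℂ :=
  let e7 := 3 - (e1 + e2 + e3 + e4 + e5 + e6)
  (-4*(e1 + e2 - e3 - e4)^3 - 27*e5*e6*e7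
    + 9*(e1 + e2 - e3 - e4)*(e5*e6 + e5*e7 + e6*e7 - 2)
    + 9*e1*e2*(e1 + e2 - 1) + 18*(e1 + e2 - 1)*(e3^2 + e3*e4 + e4^2)
    - 9*e3*e4*(e3 + e4 - 1) - 18*(e3 + e4 - 1)*(e1^2 + e1*e2 + e2^2)) / 54

/-- Coefficient of ∂³ of E₃. -/
noncomputable def E3c3 (x : ℂ) : ℂ := x^2*(x - 1)^2

/-- Coefficient of ∂² of E₃. -/
noncomputable def E3c2 (e1 e2 e3 e4 e5 e6 : ℂ) (x : ℂ) : ℂ :=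
  x*(x - 1)*((6 - e1 - e2 - e3 - e4)*x + e1 + e2 - 3)

/-- Coefficient of ∂ of E₃. -/
noncomputable def E3c1 (e1 e2 e3 e4 e5 e6 : ℂ) (x : ℂ) : ℂ :=
  let e7 := 3 - (e1 + e2 + e3 + e4 + e5 + e6)
  ((e5 + e6 + 1)*e7 + (e6 + 1)*(e5 + 1)) * x^2
  + (-(e5 + e6)*e7 - e1*e2 + e3*e4 - e5*e6 + 2*e1 + 2*e2 - 4) * x
  + (e1 - 1)*(e2 - 1)

/-- Coefficient of 1 of E₃. -/
noncomputable def E3c0 (e1 e2 e3 e4 e5 e6 : ℂ) (x : ℂ) : ℂ :=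
  let e7 := 3 - (e1 + e2 + e3 + e4 + e5 + e6)
  (e5*e6*e7) * x + A00 e1 e2 e3 e4 e5 e6

/-- The operator E₃(e₁,…,e₆) acting on a function u. -/
noncomputable def E3op (e1 e2 e3 e4 e5 e6 : ℂ) (u : ℂ → ℂ) : ℂ → ℂ := fun x =>
  E3c3 x * iteratedDeriv 3 u x + E3c2 e1 e2 e3 e4 e5 e6 x * iteratedDeriv 2 u x
    + E3c1 e1 e2 e3 e4 e5 e6 x * deriv u x + E3c0 e1 e2 e3 e4 e5 e6 x * u x

/-- The adjoint E₃* acting on a function u: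
(E₃*u)(x) = (a₃u)'''(x) − (a₂u)''(x) + (a₁u)'(x) − a₀(x)·u(x). -/
noncomputable def E3adj (e1 e2 e3 e4 e5 e6 : ℂ) (u : ℂ → ℂ) : ℂ → ℂ := fun x =>
  iteratedDeriv 3 (fun y => E3c3 y * u y) x
  - iteratedDeriv 2 (fun y => E3c2 e1 e2 e3 e4 e5 e6 y * u y) x
  + deriv (fun y => E3c1 e1 e2 e3 e4 e5 e6 y * u y) x
  - E3c0 e1 e2 e3 e4 e5 e6 x * u x

theorem E3_adjoint_symmetry (e1 e2 e3 e4 e5 e6 : ℂ) (U : Set ℂ) (hU : IsOpen U)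
    (u : ℂ → ℂ) (hu : DifferentiableOn ℂ u U) (x : ℂ) (hx : x ∈ U) :
    E3adj e1 e2 e3 e4 e5 e6 u x
      = E3op (-e1) (-e2) (-e3) (-e4) (2 - e5) (2 - e6) u x := by

  have hA : AnalyticOnNhd ℂ u U := hu.analyticOnNhd hU
  have h3f : (fun y => E3c3 y * u y) = (fun y => Pq 0 0 1 (-2) 1 y * u y) := by
    funext y; unfold E3c3 Pq; ring
  have h2f : (fun y => E3c2 e1 e2 e3 e4 e5 e6 y * u y)
      = (fun y => Pq 0 (-(e1+e2-3)) ((e1+e2-3)-(6-e1-e2-e3-e4)) (6-e1-e2-e3-e4) 0 y * u y) := by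
    funext y; unfold E3c2 Pq; ring
  have h1f : (fun y => E3c1 e1 e2 e3 e4 e5 e6 y * u y)
      = (fun y => Pq ((e1-1)*(e2-1))
          (-(e5+e6)*(3-(e1+e2+e3+e4+e5+e6)) - e1*e2 + e3*e4 - e5*e6 + 2*e1+2*e2-4)
          ((e5+e6+1)*(3-(e1+e2+e3+e4+e5+e6))+(e6+1)*(e5+1)) 0 0 y * u y) := by
    funext y; unfold E3c1 Pq; ring
  unfold E3adj E3op
  rw [h3f, h2f, h1f]
  simp only [itd3, itd2]
  rw [key3 u U hU hA _ _ _ _ _ x hx, key2 u U hU hA _ _ _ _ _ x hx,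
    derivPq_mul _ _ _ _ _ x (hA x hx).differentiableAt]
  unfold Pq E3c3 E3c2 E3c1 E3c0 A00
  ring
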